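/- For p > 1 and nonnegative reals s₁,t₁,s₂,t₂ > 0, equality |((s₁+s₂)/2)^{1/p} - ((t₁+t₂)/2)^{1/p}|^p = (1/2)|s₁^{1/p}-t₁^{1/p}|^p + (1/2)|s₂^{1/p}-t₂^{1/p}|^p holds only if s₁t₂ = s₂t₁. -/

import Mathlib

open Set

private noncomputable def phi2 (p x : ℝ) : ℝ :=
  if 1 ≤ x then (1 - x ^ (-(1/p))) ^ (p - 1) else -((x ^ (-(1/p)) - 1) ^ (p - 1))

private lemma psi_deriv0 {p : ℝ} (hp : 1 < p) :
    HasDerivAt (fun t : ℝ => |t| ^ p) 0 0 := by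
  rw [hasDerivAt_iff_tendsto]
  have hkey : ∀ t : ℝ, ‖t - 0‖⁻¹ * ‖|t| ^ p - |(0:ℝ)| ^ p - (t - 0) • (0:ℝ)‖
      = |t| ^ (p - 1) := by
    intro t
    rcases eq_or_ne t 0 with rfl | ht
    · simp [Real.zero_rpow (by linarith : p ≠ 0),
        Real.zero_rpow (by linarith : p - 1 ≠ 0)]
    · have h1 : (0:ℝ) < |t| := abs_pos.2 ht
      rw [abs_zero, Real.zero_rpow (by linarith : p ≠ 0)]
      simp only [smul_zero, sub_zero, Real.norm_eq_abs]
      rw [abs_of_nonneg (Real.rpow_nonneg (abs_nonneg t) p)]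
      rw [show p = (p - 1) + 1 by ring, Real.rpow_add h1, Real.rpow_one]
      field_simp; ring_nf
  have : Filter.Tendsto (fun t : ℝ => |t| ^ (p - 1)) (nhds 0) (nhds 0) := by
    have hc : ContinuousAt (fun s : ℝ => s ^ (p - 1)) |(0:ℝ)| := by
      simpa using Real.continuousAt_rpow_const 0 (p - 1) (Or.inr (by linarith))
    have := hc.comp continuous_abs.continuousAt (x := (0:ℝ))
    simpa [Function.comp_def, Real.zero_rpow (by linarith : p - 1 ≠ 0)] using this.tendsto
  exact this.congr fun t => (hkey t).symm

private lemma g_hasDeriv {p : ℝ} (hp : 1 < p) {x : ℝ} (hx : 0 < x) :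
    HasDerivAt (fun y : ℝ => |y ^ (1/p) - 1| ^ p) (phi2 p x) x := by
  have hp0 : (0:ℝ) < p := by linarith
  have hq0 : (0:ℝ) < 1/p := by positivity
  have hq1 : 1/p < 1 := by rw [div_lt_one hp0]; exact hp
  have hqp : (1/p) * p = 1 := by field_simp
  rcases lt_trichotomy x 1 with hx1 | hx1 | hx1
  · -- x < 1 : locally g y = (1 - y^q)^p
    have hmem : x ∈ Ioo (0:ℝ) 1 := ⟨hx, hx1⟩
    have hev : ∀ᶠ y in nhds x, |y ^ (1/p) - 1| ^ p = (1 - y ^ (1/p)) ^ p := by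
      filter_upwards [isOpen_Ioo.mem_nhds hmem] with y hy
      have : y ^ (1/p) < 1 := Real.rpow_lt_one hy.1.le hy.2 hq0
      rw [abs_of_nonpos (by linarith), neg_sub]
    have hxq : x ^ (1/p) < 1 := Real.rpow_lt_one hx.le hx1 hq0
    have h1 : HasDerivAt (fun y : ℝ => 1 - y ^ (1/p)) (-((1/p) * x ^ (1/p - 1))) x :=
      (Real.hasDerivAt_rpow_const (Or.inl hx.ne')).const_sub 1
    have h2 : HasDerivAt (fun t : ℝ => t ^ p)
        (p * (1 - x ^ (1/p)) ^ (p - 1)) (1 - x ^ (1/p)) :=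
      Real.hasDerivAt_rpow_const (Or.inl (by linarith))
    have h3 := h2.comp x h1
    have heqd : p * (1 - x ^ (1/p)) ^ (p - 1) * -((1/p) * x ^ (1/p - 1)) = phi2 p x := by
      rw [phi2, if_neg (by linarith)]
      have e1 : x ^ (-(1/p)) - 1 = (1 - x ^ (1/p)) * x ^ (-(1/p)) := by
        rw [sub_mul, one_mul, ← Real.rpow_add hx, add_neg_cancel, Real.rpow_zero]
      rw [e1, Real.mul_rpow (by linarith) (Real.rpow_nonneg hx.le _),
        ← Real.rpow_mul hx.le]
      have e2 : -(1/p) * (p - 1) = 1/p - 1 := by field_simp; ring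
      rw [e2]
      field_simp
    rw [heqd] at h3
    exact h3.congr_of_eventuallyEq hev
  · -- x = 1
    subst hx1
    have h1 : HasDerivAt (fun y : ℝ => y ^ (1/p) - 1) ((1/p) * (1:ℝ) ^ (1/p - 1)) 1 :=
      (Real.hasDerivAt_rpow_const (Or.inl one_ne_zero)).sub_const 1
    have h2 : HasDerivAt (fun t : ℝ => |t| ^ p) 0 ((1:ℝ) ^ (1/p) - 1) := by
      rw [Real.one_rpow, sub_self]; exact psi_deriv0 hp
    have h3 := HasDerivAt.comp (h := fun y : ℝ => y ^ (1/p) - 1)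
      (h₂ := fun t : ℝ => |t| ^ p) 1 h2 h1
    have : phi2 p 1 = 0 := by
      simp [phi2, Real.one_rpow, Real.zero_rpow (by linarith : p - 1 ≠ 0)]
    rw [this]
    simpa [Function.comp_def] using h3
  · -- 1 < x : locally g y = (y^q - 1)^p
    have hev : ∀ᶠ y in nhds x, |y ^ (1/p) - 1| ^ p = (y ^ (1/p) - 1) ^ p := by
      filter_upwards [isOpen_Ioi.mem_nhds (show x ∈ Ioi (1:ℝ) from hx1)] with y hy
      have hy' : (1:ℝ) < y := hy
      have : (1:ℝ) < y ^ (1/p) :=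
        (Real.one_lt_rpow_iff_of_pos (by linarith)).2 (Or.inl ⟨hy', hq0⟩)
      rw [abs_of_nonneg (by linarith)]
    have hxq : (1:ℝ) < x ^ (1/p) :=
      (Real.one_lt_rpow_iff_of_pos hx).2 (Or.inl ⟨hx1, hq0⟩)
    have h1 : HasDerivAt (fun y : ℝ => y ^ (1/p) - 1) ((1/p) * x ^ (1/p - 1)) x :=
      (Real.hasDerivAt_rpow_const (Or.inl hx.ne')).sub_const 1
    have h2 : HasDerivAt (fun t : ℝ => t ^ p)
        (p * (x ^ (1/p) - 1) ^ (p - 1)) (x ^ (1/p) - 1) :=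
      Real.hasDerivAt_rpow_const (Or.inl (by linarith))
    have h3 := h2.comp x h1
    have heqd : p * (x ^ (1/p) - 1) ^ (p - 1) * ((1/p) * x ^ (1/p - 1)) = phi2 p x := by
      rw [phi2, if_pos (by linarith)]
      have e1 : 1 - x ^ (-(1/p)) = (x ^ (1/p) - 1) * x ^ (-(1/p)) := by
        rw [sub_mul, one_mul, ← Real.rpow_add hx, add_neg_cancel, Real.rpow_zero]
      rw [e1, Real.mul_rpow (by linarith) (Real.rpow_nonneg hx.le _),
        ← Real.rpow_mul hx.le]
      have e2 : -(1/p) * (p - 1) = 1/p - 1 := by field_simp; ring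
      rw [e2]
      field_simp
    rw [heqd] at h3
    exact h3.congr_of_eventuallyEq hev

private lemma phi2_strictMono {p : ℝ} (hp : 1 < p) : StrictMonoOn (phi2 p) (Ioi 0) := by
  have hp0 : (0:ℝ) < p := by linarith
  have hq0 : (0:ℝ) < 1/p := by positivity
  intro x hx y hy hxy
  have hx0 : (0:ℝ) < x := hx
  have hy0 : (0:ℝ) < y := hy
  have hlt : y ^ (-(1/p)) < x ^ (-(1/p)) := by
    rw [Real.rpow_neg hx0.le, Real.rpow_neg hy0.le]
    exact inv_strictAnti₀ (Real.rpow_pos_of_pos hx0 _)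
      (Real.rpow_lt_rpow hx0.le hxy hq0)
  rcases le_or_gt 1 x with h1x | h1x
  · -- 1 ≤ x < y
    have h1y : 1 ≤ y := by linarith
    rw [phi2, if_pos h1x, phi2, if_pos h1y]
    have hx1 : x ^ (-(1/p)) ≤ 1 := by
      rw [Real.rpow_neg hx0.le]
      exact inv_le_one_of_one_le₀ (Real.one_le_rpow h1x hq0.le)
    exact Real.rpow_lt_rpow (by linarith) (by linarith) (by linarith)
  · rcases le_or_gt 1 y with h1y | h1y
    · -- x < 1 ≤ y
      rw [phi2, if_neg (by linarith), phi2, if_pos h1y]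
      have hxgt : 1 < x ^ (-(1/p)) := by
        rw [Real.rpow_neg hx0.le]
        exact (one_lt_inv₀ (Real.rpow_pos_of_pos hx0 _)).2
          (Real.rpow_lt_one hx0.le h1x hq0)
      have hyle : y ^ (-(1/p)) ≤ 1 := by
        rw [Real.rpow_neg hy0.le]
        exact inv_le_one_of_one_le₀ (Real.one_le_rpow h1y hq0.le)
      have hneg : 0 < (x ^ (-(1/p)) - 1) ^ (p - 1) :=
        Real.rpow_pos_of_pos (by linarith) _
      have hpos : 0 ≤ (1 - y ^ (-(1/p))) ^ (p - 1) :=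
        Real.rpow_nonneg (by linarith) _
      linarith
    · -- x < y < 1
      rw [phi2, if_neg (by linarith), phi2, if_neg (by linarith)]
      have hygt : 1 < y ^ (-(1/p)) := by
        rw [Real.rpow_neg hy0.le]
        exact (one_lt_inv₀ (Real.rpow_pos_of_pos hy0 _)).2
          (Real.rpow_lt_one hy0.le h1y hq0)
      have := Real.rpow_lt_rpow (by linarith : (0:ℝ) ≤ y ^ (-(1/p)) - 1)
        (by linarith : y ^ (-(1/p)) - 1 < x ^ (-(1/p)) - 1) (by linarith : (0:ℝ) < p - 1)
      linarith

private lemma g_strictConvexOn {p : ℝ} (hp : 1 < p) :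
    StrictConvexOn ℝ (Ioi 0) (fun x : ℝ => |x ^ (1/p) - 1| ^ p) := by
  apply StrictMonoOn.strictConvexOn_of_deriv (convex_Ioi 0)
  · -- continuity
    have h1 : ContinuousOn (fun x : ℝ => x ^ (1/p)) (Ioi 0) := fun x hx =>
      (Real.continuousAt_rpow_const x _ (Or.inl (ne_of_gt hx))).continuousWithinAt
    exact ((h1.sub continuousOn_const).abs).rpow_const fun x hx =>
      Or.inr (by linarith)
  · rw [interior_Ioi]
    intro x hx y hy hxy
    rw [(g_hasDeriv hp hx).deriv, (g_hasDeriv hp hy).deriv]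
    exact phi2_strictMono hp hx hy hxy

theorem stmt_2 (p : ℝ) (hp : 1 < p) (s₁ t₁ s₂ t₂ : ℝ)
    (hs₁ : 0 < s₁) (ht₁ : 0 < t₁) (hs₂ : 0 < s₂) (ht₂ : 0 < t₂)
    (heq : |((s₁ + s₂) / 2) ^ (1 / p) - ((t₁ + t₂) / 2) ^ (1 / p)| ^ p =
      (1 / 2) * |s₁ ^ (1 / p) - t₁ ^ (1 / p)| ^ p +
      (1 / 2) * |s₂ ^ (1 / p) - t₂ ^ (1 / p)| ^ p) :
    s₁ * t₂ = s₂ * t₁ := by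
  have hp0 : (0:ℝ) < p := by linarith
  have key : ∀ s t : ℝ, 0 < s → 0 < t →
      |s ^ (1/p) - t ^ (1/p)| ^ p = t * |(s/t) ^ (1/p) - 1| ^ p := by
    intro s t hs ht
    have ht' : (0:ℝ) < t ^ (1/p) := Real.rpow_pos_of_pos ht _
    have h2 : |s ^ (1/p) - t ^ (1/p)| = t ^ (1/p) * |(s/t) ^ (1/p) - 1| := by
      have hinner : t ^ (1/p) * ((s/t) ^ (1/p) - 1) = s ^ (1/p) - t ^ (1/p) := by
        rw [Real.div_rpow hs.le ht.le, mul_sub, mul_one,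
          mul_div_cancel₀ _ (ne_of_gt ht')]
      rw [← hinner, abs_mul, abs_of_pos ht']
    rw [h2, Real.mul_rpow ht'.le (abs_nonneg _), ← Real.rpow_mul ht.le,
      one_div_mul_cancel (by linarith), Real.rpow_one]
  have e₁ := key ((s₁+s₂)/2) ((t₁+t₂)/2) (by positivity) (by positivity)
  have e₂ := key s₁ t₁ hs₁ ht₁
  have e₃ := key s₂ t₂ hs₂ ht₂
  rw [e₁, e₂, e₃] at heq
  have hT : (0:ℝ) < t₁ + t₂ := by linarith
  have hm : ((s₁+s₂)/2)/((t₁+t₂)/2) = (s₁+s₂)/(t₁+t₂) := by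
    rw [div_div_div_comm, div_self (two_ne_zero), div_one]
  rw [hm] at heq
  set a : ℝ := t₁ / (t₁ + t₂) with ha
  set b : ℝ := t₂ / (t₁ + t₂) with hb
  have ha0 : 0 < a := by positivity
  have hb0 : 0 < b := by positivity
  have hab : a + b = 1 := by rw [ha, hb]; field_simp
  have hcomb : a * (s₁/t₁) + b * (s₂/t₂) = (s₁+s₂)/(t₁+t₂) := by
    rw [ha, hb]
    field_simp
  by_contra hne
  have hxne : s₁/t₁ ≠ s₂/t₂ := by
    intro h
    rw [div_eq_div_iff (ne_of_gt ht₁) (ne_of_gt ht₂)] at h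
    exact hne h
  have hconv := (g_strictConvexOn hp).2 (mem_Ioi.2 (by positivity : (0:ℝ) < s₁/t₁))
    (mem_Ioi.2 (by positivity : (0:ℝ) < s₂/t₂)) hxne ha0 hb0 hab
  simp only [smul_eq_mul] at hconv
  rw [hcomb] at hconv
  set y₁ : ℝ := |(s₁/t₁) ^ (1/p) - 1| ^ p with hy₁
  set y₂ : ℝ := |(s₂/t₂) ^ (1/p) - 1| ^ p with hy₂
  set ym : ℝ := |((s₁+s₂)/(t₁+t₂)) ^ (1/p) - 1| ^ p with hym
  -- heq : (t₁+t₂)/2 * ym = 1/2 * (t₁ * y₁) + 1/2 * (t₂ * y₂)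
  -- hconv : ym < a * y₁ + b * y₂
  have hlt := mul_lt_mul_of_pos_left hconv (by positivity : (0:ℝ) < (t₁+t₂)/2)
  have hr : (t₁+t₂)/2 * (a * y₁ + b * y₂) = 1/2 * (t₁ * y₁) + 1/2 * (t₂ * y₂) := by
    rw [ha, hb]
    field_simp
  rw [hr] at hlt
  linarith
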